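/- arXiv:2511.03323 — 2 statements merged into one kernel-verified Lean document; each statement's English description precedes it below -/
import Mathlib

section
/- Assume n is a prime with gcd(n, q) = 1 and n ∤ q−1, and let m = ord_n(q) be the multiplicative order of q modulo n. Then ord_{nr}(q) = m, every i ∈ Z_{n,r} satisfies l_i ∈ {1, m}, N_1 = 1, and N_m = (n−1)/m. -/
open scoped Classical

/-- The `q`-cyclotomic coset of `i` modulo `N`, with representatives taken in `{1, …, N}`. -/
noncomputable def cosetOf (q N i : ℕ) : Finset ℕ :=
  (Finset.Icc 1 N).filter (fun x => ∃ j : ℕ, x ≡ i * q ^ j [MOD N])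

/-- `Z_{n,r} = {1 + i r : 0 ≤ i ≤ n-1}`. -/
def Zset (n r : ℕ) : Finset ℕ := (Finset.range n).image (fun i => 1 + i * r)

/-- The collection of `q`-cyclotomic cosets contained in `Z_{n,r}`. -/
noncomputable def cosetsIn (q n r : ℕ) : Finset (Finset ℕ) :=
  (Zset n r).image (fun i => cosetOf q (n * r) i)

/-- `N_l`: the number of `q`-cyclotomic cosets of size `l` contained in `Z_{n,r}`. -/
noncomputable def Ncount (q n r l : ℕ) : ℕ :=
  ((cosetsIn q n r).filter (fun C => C.card = l)).card

/-- Coset leader: the smallest element of a coset. -/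
noncomputable def leader (C : Finset ℕ) : ℕ := sInf (C : Set ℕ)

/-- The sorted (increasing) list of coset leaders of the cosets of size `l` in `Z_{n,r}`. -/
noncomputable def leaderList (q n r l : ℕ) : List ℕ :=
  Finset.sort (((cosetsIn q n r).filter (fun C => C.card = l)).image leader) (· ≤ ·)

/-- `δ_i^{(l)}`: the `i`-th smallest coset leader (1-indexed). -/
noncomputable def delta (q n r l i : ℕ) : ℕ := (leaderList q n r l).getD (i - 1) 0

lemma mem_Zset_iff {n r x : ℕ} (hr : 0 < r) :
    x ∈ Zset n r ↔ 1 ≤ x ∧ x ≤ n * r ∧ x % r = 1 % r := by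
  simp only [Zset, Finset.mem_image, Finset.mem_range]
  constructor
  · rintro ⟨j, hj, rfl⟩
    have h1 : (j + 1) * r ≤ n * r := Nat.mul_le_mul_right r (by omega)
    rw [add_mul, one_mul] at h1
    refine ⟨by omega, by omega, by simp [Nat.add_mul_mod_self_right]⟩
  · rintro ⟨h1, h2, h3⟩
    have hd : r ∣ x - 1 := (Nat.modEq_iff_dvd' h1).mp h3.symm
    obtain ⟨j, hj⟩ := hd
    have hlt : r * j < r * n := by
      have : n * r = r * n := mul_comm n r
      omega
    have hc : r * j = j * r := mul_comm r j
    exact ⟨j, Nat.lt_of_mul_lt_mul_left hlt, by omega⟩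

lemma mem_cosetOf_iff {q N i x : ℕ} :
    x ∈ cosetOf q N i ↔ 1 ≤ x ∧ x ≤ N ∧ ∃ j, x ≡ i * q ^ j [MOD N] := by
  simp [cosetOf, and_assoc]

lemma eq_of_modEq_of_bounds {a b N : ℕ} (h : a ≡ b [MOD N]) (h1 : 1 ≤ a) (h2 : a ≤ N)
    (h3 : 1 ≤ b) (h4 : b ≤ N) : a = b := by
  obtain ⟨k, hk⟩ := h.dvd
  have hN' : (0:ℤ) < N := by exact_mod_cast h1.trans h2
  have hb1 : (1:ℤ) ≤ a := by exact_mod_cast h1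
  have hb2 : (a:ℤ) ≤ N := by exact_mod_cast h2
  have hb3 : (1:ℤ) ≤ b := by exact_mod_cast h3
  have hb4 : (b:ℤ) ≤ N := by exact_mod_cast h4
  have hk0 : k = 0 := by nlinarith
  subst hk0
  simp at hk
  exact_mod_cast (by omega : (a:ℤ) = b)

lemma card_cosetOf (q N i : ℕ) (hN : 0 < N) :
    haveI : NeZero N := ⟨hN.ne'⟩
    (cosetOf q N i).card =
      (Finset.univ.filter (fun y : ZMod N => ∃ j : ℕ, y = (i : ZMod N) * (q : ZMod N) ^ j)).card := by
  haveI : NeZero N := ⟨hN.ne'⟩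
  refine Finset.card_bij (fun x _ => (x : ZMod N)) ?_ ?_ ?_
  · intro x hx
    rw [mem_cosetOf_iff] at hx
    obtain ⟨h1, h2, j, hj⟩ := hx
    simp only [Finset.mem_filter, Finset.mem_univ, true_and]
    refine ⟨j, ?_⟩
    have := (ZMod.natCast_eq_natCast_iff _ _ _).mpr hj
    push_cast at this
    exact this
  · intro a ha b hb hab
    rw [mem_cosetOf_iff] at ha hb
    exact eq_of_modEq_of_bounds ((ZMod.natCast_eq_natCast_iff a b N).mp hab)
      ha.1 ha.2.1 hb.1 hb.2.1
  · intro y hy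
    simp only [Finset.mem_filter, Finset.mem_univ, true_and] at hy
    obtain ⟨j, rfl⟩ := hy
    set t := (i * q ^ j) % N with ht
    have htlt : t < N := Nat.mod_lt _ hN
    have hmod : (if t = 0 then N else t) ≡ i * q ^ j [MOD N] := by
      show (if t = 0 then N else t) % N = (i * q ^ j) % N
      split_ifs with h
      · simp [Nat.mod_self, ← ht, h]
      · rw [← ht, Nat.mod_mod_of_dvd _ dvd_rfl]
    refine ⟨if t = 0 then N else t, ?_, ?_⟩
    · rw [mem_cosetOf_iff]
      exact ⟨by split_ifs with h <;> omega, by split_ifs with h <;> omega, j, hmod⟩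
    · have := (ZMod.natCast_eq_natCast_iff _ _ _).mpr hmod
      push_cast at this
      simpa using this

lemma coset_rel_symm {q N i i' m0 : ℕ} (hm0 : 0 < m0) (hq1 : q ^ m0 ≡ 1 [MOD N])
    (h : ∃ t, i' ≡ i * q ^ t [MOD N]) : ∃ s, i ≡ i' * q ^ s [MOD N] := by
  obtain ⟨t, ht⟩ := h
  refine ⟨m0 * (t + 1) - t, ?_⟩
  have hts : t + (m0 * (t + 1) - t) = m0 * (t + 1) := by
    have : t + 1 ≤ m0 * (t + 1) := Nat.le_mul_of_pos_left _ hm0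
    omega
  have key : i' * q ^ (m0 * (t + 1) - t) ≡ i [MOD N] := by
    calc i' * q ^ (m0 * (t + 1) - t)
        ≡ i * q ^ t * q ^ (m0 * (t + 1) - t) [MOD N] := Nat.ModEq.mul_right _ ht
      _ = i * (q ^ m0) ^ (t + 1) := by rw [mul_assoc, ← pow_add, hts, pow_mul]
      _ ≡ i * 1 ^ (t + 1) [MOD N] := Nat.ModEq.mul_left i (hq1.pow _)
      _ = i := by rw [one_pow, mul_one]
  exact key.symm

lemma cosetOf_subset_of {q N i i' : ℕ} (h : ∃ t, i' ≡ i * q ^ t [MOD N]) :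
    cosetOf q N i' ⊆ cosetOf q N i := by
  obtain ⟨t, ht⟩ := h
  intro x hx
  rw [mem_cosetOf_iff] at hx ⊢
  obtain ⟨h1, h2, j, hj⟩ := hx
  refine ⟨h1, h2, t + j, ?_⟩
  calc x ≡ i' * q ^ j [MOD N] := hj
    _ ≡ i * q ^ t * q ^ j [MOD N] := Nat.ModEq.mul_right _ ht
    _ = i * q ^ (t + j) := by rw [mul_assoc, ← pow_add]

lemma cosetOf_eq_of_mem {q N i i' m0 x : ℕ} (hm0 : 0 < m0) (hq1 : q ^ m0 ≡ 1 [MOD N])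
    (hx : x ∈ cosetOf q N i) (hx' : x ∈ cosetOf q N i') :
    cosetOf q N i = cosetOf q N i' := by
  rw [mem_cosetOf_iff] at hx hx'
  obtain ⟨-, -, j, hj⟩ := hx
  obtain ⟨-, -, j', hj'⟩ := hx'
  obtain ⟨s, hs⟩ := coset_rel_symm hm0 hq1 ⟨j', hj'⟩
  have hrel : ∃ t, i' ≡ i * q ^ t [MOD N] := by
    refine ⟨j + s, ?_⟩
    calc i' ≡ x * q ^ s [MOD N] := hs
      _ ≡ i * q ^ j * q ^ s [MOD N] := Nat.ModEq.mul_right _ hj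
      _ = i * q ^ (j + s) := by rw [mul_assoc, ← pow_add]
  obtain ⟨s', hs'⟩ := coset_rel_symm hm0 hq1 hrel
  exact le_antisymm (cosetOf_subset_of ⟨s', hs'⟩) (cosetOf_subset_of hrel)

lemma card_cosetOf_of_fixed {q N i : ℕ} (hN : 0 < N) (hiq : i * q ≡ i [MOD N]) :
    (cosetOf q N i).card = 1 := by
  haveI : NeZero N := ⟨hN.ne'⟩
  rw [card_cosetOf q N i hN]
  have hiq' : (i : ZMod N) * q = i := by
    have := (ZMod.natCast_eq_natCast_iff _ _ _).mpr hiq; push_cast at this; exact this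
  have hfix : ∀ j : ℕ, (i : ZMod N) * (q : ZMod N) ^ j = i := by
    intro j
    induction j with
    | zero => simp
    | succ j ih => rw [pow_succ, ← mul_assoc, ih, hiq']
  have hset : (Finset.univ.filter fun y : ZMod N => ∃ j : ℕ, y = (i : ZMod N) * (q : ZMod N) ^ j)
      = {(i : ZMod N)} := by
    ext y
    simp only [Finset.mem_filter, Finset.mem_univ, true_and, Finset.mem_singleton]
    constructor
    · rintro ⟨j, rfl⟩; exact hfix j
    · rintro rfl; exact ⟨0, by simp⟩
  rw [hset, Finset.card_singleton]

lemma card_cosetOf_of_not_dvd {q n r i m : ℕ} [Fact n.Prime] (hr : 0 < r)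
    (hco : Nat.Coprime n q) (hm : m = orderOf (q : ZMod n)) (hm_pos : 0 < m)
    (hqm : q ^ m ≡ 1 [MOD n * r]) (hi : ¬ n ∣ i) :
    (cosetOf q (n * r) i).card = m := by
  have hn2 : 2 ≤ n := (Fact.out : n.Prime).two_le
  have hN : 0 < n * r := by positivity
  haveI : NeZero (n * r) := ⟨hN.ne'⟩
  haveI : NeZero n := ⟨by omega⟩
  rw [card_cosetOf q (n * r) i hN]
  have hq1N : (q : ZMod (n * r)) ^ m = 1 := by
    have := (ZMod.natCast_eq_natCast_iff _ _ _).mpr hqm; push_cast at this; exact this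
  have hset : (Finset.univ.filter fun y : ZMod (n * r) =>
        ∃ j : ℕ, y = (i : ZMod (n * r)) * (q : ZMod (n * r)) ^ j)
      = (Finset.range m).image (fun j => (i : ZMod (n * r)) * (q : ZMod (n * r)) ^ j) := by
    ext y
    simp only [Finset.mem_filter, Finset.mem_univ, true_and, Finset.mem_image, Finset.mem_range]
    constructor
    · rintro ⟨j, rfl⟩
      refine ⟨j % m, Nat.mod_lt _ hm_pos, ?_⟩
      conv_rhs => rw [← Nat.div_add_mod j m, pow_add, pow_mul, hq1N, one_pow, one_mul]
    · rintro ⟨j, -, rfl⟩; exact ⟨j, rfl⟩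
  rw [hset, Finset.card_image_of_injOn, Finset.card_range]
  intro a ha b hb hab
  simp only [Finset.coe_range, Set.mem_Iio] at ha hb
  have h1 : ((i * q ^ a : ℕ) : ZMod (n * r)) = ((i * q ^ b : ℕ) : ZMod (n * r)) := by
    push_cast; exact hab
  have h2 : i * q ^ a ≡ i * q ^ b [MOD n] :=
    Nat.ModEq.of_dvd (dvd_mul_right n r) ((ZMod.natCast_eq_natCast_iff _ _ _).mp h1)
  have h3 : (i : ZMod n) * (q : ZMod n) ^ a = (i : ZMod n) * (q : ZMod n) ^ b := by
    have := (ZMod.natCast_eq_natCast_iff _ _ _).mpr h2; push_cast at this; exact this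
  have hi0 : (i : ZMod n) ≠ 0 := by
    rw [Ne, ZMod.natCast_eq_zero_iff]; exact hi
  have h4 : (q : ZMod n) ^ a = (q : ZMod n) ^ b := mul_left_cancel₀ hi0 h3
  set u := ZMod.unitOfCoprime q hco.symm with hu
  have hcu : (u : ZMod n) = q := ZMod.coe_unitOfCoprime q hco.symm
  have hord : orderOf u = m := by rw [hm, ← hcu, orderOf_units]
  have h5 : u ^ a = u ^ b := by
    apply Units.ext
    rw [Units.val_pow_eq_pow_val, Units.val_pow_eq_pow_val, hcu]
    exact h4
  have h6 : a ≡ b [MOD m] := by rw [← hord]; exact pow_eq_pow_iff_modEq.mp h5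
  have : a % m = b % m := h6
  rwa [Nat.mod_eq_of_lt ha, Nat.mod_eq_of_lt hb] at this

theorem stmt14 (q n r : ℕ) (hq : IsPrimePow q) (hn : n.Prime)
    (hco : Nat.Coprime n q) (hr : 0 < r) (hrdvd : r ∣ q - 1)
    (hndvd : ¬ n ∣ q - 1) (m : ℕ) (hm : m = orderOf (q : ZMod n)) :
    orderOf (q : ZMod (n * r)) = m ∧
    (∀ i ∈ Zset n r, (cosetOf q (n * r) i).card = 1 ∨ (cosetOf q (n * r) i).card = m) ∧
    Ncount q n r 1 = 1 ∧ Ncount q n r m = (n - 1) / m := by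
  haveI : Fact n.Prime := ⟨hn⟩
  have hn2 : 2 ≤ n := hn.two_le
  have hq2 : 2 ≤ q := hq.two_le
  have hN : 0 < n * r := by positivity
  haveI : NeZero (n * r) := ⟨hN.ne'⟩
  haveI : NeZero n := ⟨by omega⟩
  -- basic coprimality and congruence facts
  have hnr : Nat.Coprime n r := by
    rw [hn.coprime_iff_not_dvd]
    exact fun h => hndvd (h.trans hrdvd)
  have hqr : q ≡ 1 [MOD r] := ((Nat.modEq_iff_dvd' (by omega)).mpr hrdvd).symm
  -- order facts
  set u := ZMod.unitOfCoprime q hco.symm with hu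
  have hcu : (u : ZMod n) = q := ZMod.coe_unitOfCoprime q hco.symm
  have hord : orderOf u = m := by rw [hm, ← hcu, orderOf_units]
  have hm_pos : 0 < m := by rw [← hord]; exact orderOf_pos u
  have hm1 : 1 < m := by
    rcases Nat.lt_or_ge 1 m with h | h
    · exact h
    · exfalso
      have hm1' : m = 1 := by omega
      have : (q : ZMod n) = 1 := by
        rw [← orderOf_eq_one_iff, ← hm, hm1']
      have hq1 : q ≡ 1 [MOD n] := by
        rw [← ZMod.natCast_eq_natCast_iff]
        simpa using this
      exact hndvd ((Nat.modEq_iff_dvd' (by omega)).mp hq1.symm)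
  have hqm_n : q ^ m ≡ 1 [MOD n] := by
    have : (q : ZMod n) ^ m = 1 := by rw [hm]; exact pow_orderOf_eq_one _
    rw [← ZMod.natCast_eq_natCast_iff]
    push_cast
    simpa using this
  have hqm_r : q ^ m ≡ 1 [MOD r] := by
    have := hqr.pow m
    simpa using this
  have hqm : q ^ m ≡ 1 [MOD n * r] :=
    (Nat.modEq_and_modEq_iff_modEq_mul hnr).mp ⟨hqm_n, hqm_r⟩
  -- Part 1
  have part1 : orderOf (q : ZMod (n * r)) = m := by
    apply Nat.dvd_antisymm
    · apply orderOf_dvd_of_pow_eq_one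
      have := (ZMod.natCast_eq_natCast_iff _ _ _).mpr hqm
      push_cast at this
      simpa using this
    · rw [hm]
      apply orderOf_dvd_of_pow_eq_one
      have h1 : (q : ZMod (n * r)) ^ (orderOf (q : ZMod (n * r))) = 1 := pow_orderOf_eq_one _
      have h2 : q ^ (orderOf (q : ZMod (n * r))) ≡ 1 [MOD n * r] := by
        rw [← ZMod.natCast_eq_natCast_iff]
        push_cast
        simpa using h1
      have h3 : q ^ (orderOf (q : ZMod (n * r))) ≡ 1 [MOD n] :=
        Nat.ModEq.of_dvd (dvd_mul_right n r) h2
      have := (ZMod.natCast_eq_natCast_iff _ _ _).mpr h3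
      push_cast at this
      simpa using this
  -- Part 2: card dichotomy
  have cardA : ∀ i : ℕ, n ∣ i → i % r = 1 % r → (cosetOf q (n * r) i).card = 1 := by
    intro i hni hir
    apply card_cosetOf_of_fixed hN
    apply (Nat.modEq_and_modEq_iff_modEq_mul hnr).mp
    constructor
    · have h0 : i ≡ 0 [MOD n] := (Nat.modEq_zero_iff_dvd).mpr hni
      calc i * q ≡ 0 * q [MOD n] := h0.mul_right q
        _ = 0 := by ring
        _ ≡ i [MOD n] := h0.symm
    · calc i * q ≡ i * 1 [MOD r] := Nat.ModEq.mul_left i hqr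
        _ = i := by ring
  have cardB : ∀ i : ℕ, ¬ n ∣ i → (cosetOf q (n * r) i).card = m :=
    fun i hi => card_cosetOf_of_not_dvd hr hco hm hm_pos hqm hi
  have part2 : ∀ i ∈ Zset n r, (cosetOf q (n * r) i).card = 1 ∨ (cosetOf q (n * r) i).card = m := by
    intro i hi
    rw [mem_Zset_iff hr] at hi
    by_cases hni : n ∣ i
    · exact Or.inl (cardA i hni hi.2.2)
    · exact Or.inr (cardB i hni)
  -- structure of cosetsIn
  have hsub : ∀ i ∈ Zset n r, cosetOf q (n * r) i ⊆ Zset n r := by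
    intro i hi x hx
    rw [mem_Zset_iff hr] at hi ⊢
    rw [mem_cosetOf_iff] at hx
    obtain ⟨h1, h2, j, hj⟩ := hx
    refine ⟨h1, h2, ?_⟩
    have hjr : x ≡ i * q ^ j [MOD r] := Nat.ModEq.of_dvd (dvd_mul_left r n) hj
    have h1r : i ≡ 1 [MOD r] := hi.2.2
    have : x ≡ 1 [MOD r] := by
      calc x ≡ i * q ^ j [MOD r] := hjr
        _ ≡ 1 * 1 [MOD r] := Nat.ModEq.mul h1r (by simpa using hqr.pow j)
        _ = 1 := by ring
    exact this
  have hmem : ∀ i ∈ Zset n r, i ∈ cosetOf q (n * r) i := by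
    intro i hi
    rw [mem_Zset_iff hr] at hi
    rw [mem_cosetOf_iff]
    exact ⟨hi.1, hi.2.1, 0, by simpa using Nat.ModEq.refl i⟩
  have hZcard : (Zset n r).card = n := by
    rw [Zset, Finset.card_image_of_injOn, Finset.card_range]
    intro a _ b _ hab
    simp only at hab
    exact Nat.eq_of_mul_eq_mul_right hr (by omega)
  have hdisj : ∀ C ∈ cosetsIn q n r, ∀ C' ∈ cosetsIn q n r, C ≠ C' → Disjoint C C' := by
    intro C hC C' hC' hne
    rw [cosetsIn, Finset.mem_image] at hC hC'
    obtain ⟨i, hi, rfl⟩ := hC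
    obtain ⟨i', hi', rfl⟩ := hC'
    rw [Finset.disjoint_left]
    intro x hx hx'
    exact hne (cosetOf_eq_of_mem hm_pos hqm hx hx')
  have hcover : Zset n r = (cosetsIn q n r).biUnion (fun C => C) := by
    apply Finset.ext
    intro x
    simp only [Finset.mem_biUnion, cosetsIn, Finset.mem_image]
    constructor
    · intro hx
      exact ⟨cosetOf q (n * r) x, ⟨x, hx, rfl⟩, hmem x hx⟩
    · rintro ⟨C, ⟨i, hi, rfl⟩, hx⟩
      exact hsub i hi hx
  -- the unique element of Zset divisible by n
  obtain ⟨i0, hi0Z, hi0n⟩ : ∃ i0 ∈ Zset n r, n ∣ i0 := by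
    have hrn : (r : ZMod n) ≠ 0 := by
      rw [Ne, ZMod.natCast_eq_zero_iff]
      rw [hn.coprime_iff_not_dvd] at hnr
      exact hnr
    set a : ZMod n := -((r : ZMod n)⁻¹) with ha
    refine ⟨1 + a.val * r, ?_, ?_⟩
    · rw [mem_Zset_iff hr]
      have hav : a.val < n := ZMod.val_lt a
      have h1 : (a.val + 1) * r ≤ n * r := Nat.mul_le_mul_right r (by omega)
      rw [add_mul, one_mul] at h1
      refine ⟨by omega, by omega, by simp [Nat.add_mul_mod_self_right]⟩
    · rw [← ZMod.natCast_eq_zero_iff]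
      push_cast
      rw [ZMod.natCast_val, ZMod.cast_id, ha]
      field_simp
      ring
  have hi0r : i0 % r = 1 % r := ((mem_Zset_iff hr).mp hi0Z).2.2
  have huniq : ∀ i ∈ Zset n r, n ∣ i → i = i0 := by
    intro i hi hni
    rw [mem_Zset_iff hr] at hi
    have hZ0 := (mem_Zset_iff hr).mp hi0Z
    have hmodn : i ≡ i0 [MOD n] :=
      (Nat.modEq_zero_iff_dvd.mpr hni).trans (Nat.modEq_zero_iff_dvd.mpr hi0n).symm
    have hmodr : i ≡ i0 [MOD r] := by
      show i % r = i0 % r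
      rw [hi.2.2, hi0r]
    have := (Nat.modEq_and_modEq_iff_modEq_mul hnr).mp ⟨hmodn, hmodr⟩
    exact eq_of_modEq_of_bounds this hi.1 hi.2.1 hZ0.1 hZ0.2.1
  -- N_1 = 1
  have hfilter1 : (cosetsIn q n r).filter (fun C => C.card = 1) = {cosetOf q (n * r) i0} := by
    ext C
    simp only [Finset.mem_filter, Finset.mem_singleton]
    constructor
    · rintro ⟨hC, hcard⟩
      rw [cosetsIn, Finset.mem_image] at hC
      obtain ⟨i, hi, rfl⟩ := hC
      by_cases hni : n ∣ i
      · rw [huniq i hi hni]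
      · rw [cardB i hni] at hcard
        omega
    · rintro rfl
      refine ⟨?_, ?_⟩
      · rw [cosetsIn, Finset.mem_image]
        exact ⟨i0, hi0Z, rfl⟩
      · exact cardA i0 hi0n hi0r
  have part3 : Ncount q n r 1 = 1 := by
    rw [Ncount, hfilter1, Finset.card_singleton]
  -- N_m = (n-1)/m
  have hfilterm : (cosetsIn q n r).filter (fun C => ¬ C.card = 1)
      = (cosetsIn q n r).filter (fun C => C.card = m) := by
    ext C
    simp only [Finset.mem_filter, and_congr_right_iff]
    intro hC
    rw [cosetsIn, Finset.mem_image] at hC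
    obtain ⟨i, hi, rfl⟩ := hC
    rcases part2 i hi with h | h
    · rw [h]; omega
    · rw [h]; constructor
      · intro; rfl
      · intro; omega
  have h1 : ∑ C ∈ cosetsIn q n r, C.card = n := by
    have hcb := Finset.card_biUnion hdisj
    rw [← hcover, hZcard] at hcb
    simpa using hcb.symm
  have h2 : ∑ C ∈ cosetsIn q n r, C.card = Ncount q n r 1 * 1 + Ncount q n r m * m := by
    rw [← Finset.sum_filter_add_sum_filter_not (cosetsIn q n r) (fun C => C.card = 1)]
    congr 1
    · rw [Finset.sum_congr rfl (fun C hC => (Finset.mem_filter.mp hC).2), Finset.sum_const,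
        Ncount, smul_eq_mul]
    · rw [hfilterm, Finset.sum_congr rfl (fun C hC => (Finset.mem_filter.mp hC).2),
        Finset.sum_const, Ncount, smul_eq_mul]
  have hsum : n = Ncount q n r 1 * 1 + Ncount q n r m * m := by rw [← h2, h1]
  have part4 : Ncount q n r m = (n - 1) / m := by
    rw [part3, one_mul] at hsum
    have : n - 1 = Ncount q n r m * m := by omega
    rw [this, Nat.mul_div_cancel _ hm_pos]
  exact ⟨part1, part2, part3, part4⟩
end

section
/- Assume nr = (q^p−1)/s for a prime p and a positive integer s, and assume gcd(r, nr/gcd(nr, q−1)) = 1. Then every i ∈ Z_{n,r} satisfies l_i ∈ {1, p}, N_1 = gcd(n, (q−1)/r), and N_p = (n − gcd(n, (q−1)/r))/p. -/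
open scoped Classical

section OrbitLemmas

variable {M : Type*} [CommMonoid M]

/-- Finite orbit of `a` under multiplication by powers of `u` (assuming `u ^ p = 1`). -/
noncomputable def orb (u : M) (p : ℕ) (a : M) : Finset M :=
  (Finset.range p).image fun j => a * u ^ j

variable {u : M} {p : ℕ}

lemma pow_mod_eq (hu : u ^ p = 1) (j : ℕ) : u ^ j = u ^ (j % p) := by
  conv_lhs => rw [← Nat.div_add_mod j p]
  rw [pow_add, pow_mul, hu, one_pow, one_mul]

lemma mem_orb_iff (hu : u ^ p = 1) (hp : 0 < p) {a b : M} :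
    b ∈ orb u p a ↔ ∃ j : ℕ, b = a * u ^ j := by
  simp only [orb, Finset.mem_image, Finset.mem_range]
  constructor
  · rintro ⟨j, _, rfl⟩; exact ⟨j, rfl⟩
  · rintro ⟨j, rfl⟩
    exact ⟨j % p, Nat.mod_lt _ hp, by rw [← pow_mod_eq hu]⟩

lemma self_mem_orb (hu : u ^ p = 1) (hp : 0 < p) (a : M) : a ∈ orb u p a :=
  (mem_orb_iff hu hp).2 ⟨0, by simp⟩

lemma orb_eq_of_mem (hu : u ^ p = 1) (hp : 0 < p) {a b : M} (hb : b ∈ orb u p a) :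
    orb u p b = orb u p a := by
  obtain ⟨j, rfl⟩ := (mem_orb_iff hu hp).1 hb
  have hsub : ∀ c : M, ∀ k : ℕ, orb u p (c * u ^ k) ⊆ orb u p c := by
    intro c k x hx
    obtain ⟨m, rfl⟩ := (mem_orb_iff hu hp).1 hx
    exact (mem_orb_iff hu hp).2 ⟨k + m, by rw [pow_add, mul_assoc]⟩
  refine Finset.Subset.antisymm (hsub a j) ?_
  have h1 : a * u ^ j * u ^ (p - j % p) = a := by
    rw [pow_mod_eq hu j, mul_assoc, ← pow_add,
      Nat.add_sub_cancel' (Nat.mod_lt _ hp).le, hu, mul_one]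
  have := hsub (a * u ^ j) (p - j % p)
  rwa [h1] at this

lemma mul_pow_const (h : ∀ j : ℕ, u ^ j = 1) : True := trivial

lemma orb_const (hu : u ^ p = 1) {a : M} (h : a * u = a) : ∀ j : ℕ, a * u ^ j = a := by
  intro j
  induction j with
  | zero => simp
  | succ k ih => rw [pow_succ, ← mul_assoc, ih, h]

lemma orb_mul_pow_mul (hu : u ^ p = 1) {a : M} {m : ℕ} (h : a * u ^ m = a) (c : ℕ) :
    a * u ^ (m * c) = a := by
  induction c with
  | zero => simp
  | succ k ih =>
      have : m * (k + 1) = m * k + m := by ring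
      rw [this, pow_add, ← mul_assoc, ih, h]

lemma mul_u_of_pow (hu : u ^ p = 1) (hpp : p.Prime) {a : M} {m : ℕ}
    (hm0 : 0 < m) (hmp : m < p) (h : a * u ^ m = a) : a * u = a := by
  have hco : Nat.Coprime m p :=
    (hpp.coprime_iff_not_dvd.mpr fun hd => absurd (Nat.le_of_dvd hm0 hd) (not_le.mpr hmp)).symm
  obtain ⟨c, -, hc⟩ := Nat.exists_mul_mod_eq_one_of_coprime hco hpp.one_lt
  have h2 : a * u ^ (m * c) = a := orb_mul_pow_mul hu h c
  have h3 : m * c = p * (m * c / p) + 1 := by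
    have := Nat.div_add_mod (m * c) p
    omega
  rw [h3, pow_add, pow_mul, hu, one_pow, one_mul, pow_one] at h2
  exact h2

lemma card_orb (hu : u ^ p = 1) (hpp : p.Prime) (a : M) :
    (orb u p a).card = 1 ∨ (orb u p a).card = p := by
  have hp : 0 < p := hpp.pos
  by_cases h1 : a * u = a
  · left
    have : orb u p a = {a} := by
      apply Finset.Subset.antisymm
      · intro x hx
        obtain ⟨j, rfl⟩ := (mem_orb_iff hu hp).1 hx
        simp [orb_const hu h1 j]
      · exact Finset.singleton_subset_iff.2 (self_mem_orb hu hp a)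
    simp [this]
  · right
    rw [orb, Finset.card_image_of_injOn, Finset.card_range]
    have key : ∀ j k : ℕ, j < k → k < p → a * u ^ j = a * u ^ k → a * u = a := by
      intro j k hjk hkp he
      have hm : a * u ^ (j + (p - k)) = a := by
        calc a * u ^ (j + (p - k)) = a * u ^ j * u ^ (p - k) := by rw [pow_add, mul_assoc]
          _ = a * u ^ k * u ^ (p - k) := by rw [he]
          _ = a * u ^ p := by rw [mul_assoc, ← pow_add, Nat.add_sub_cancel' hkp.le]
          _ = a := by rw [hu, mul_one]
      exact mul_u_of_pow hu hpp (by omega) (by omega) hm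
    intro j hj k hk he
    simp only [Finset.coe_range, Set.mem_Iio] at hj hk
    by_contra hne
    rcases lt_or_gt_of_ne hne with hlt | hlt
    · exact h1 (key j k hlt hk he)
    · exact h1 (key k j hlt hj he.symm)


lemma card_orb_eq_one_iff (hu : u ^ p = 1) (hpp : p.Prime) (a : M) :
    (orb u p a).card = 1 ↔ a * u = a := by
  constructor
  · intro h
    obtain ⟨b, hb⟩ := Finset.card_eq_one.1 h
    have ha := self_mem_orb hu hpp.pos a
    have hau : a * u ∈ orb u p a := (mem_orb_iff hu hpp.pos).2 ⟨1, by rw [pow_one]⟩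
    rw [hb, Finset.mem_singleton] at ha hau
    rw [hau, ha]
  · intro h
    have horb : orb u p a = {a} := by
      apply Finset.Subset.antisymm
      · intro x hx
        obtain ⟨j, rfl⟩ := (mem_orb_iff hu hpp.pos).1 hx
        simp [orb_const hu h j]
      · exact Finset.singleton_subset_iff.2 (self_mem_orb hu hpp.pos a)
    simp [horb]

end OrbitLemmas

section ZModLemmas

variable {N : ℕ}

lemma card_filter_Icc (hN : 0 < N) (S : Finset (ZMod N)) :
    ((Finset.Icc 1 N).filter fun x : ℕ => (x : ZMod N) ∈ S).card = S.card := by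
  haveI : NeZero N := ⟨hN.ne'⟩
  refine Finset.card_bij (fun (x : ℕ) _ => (x : ZMod N)) ?_ ?_ ?_
  · intro x hx
    exact (Finset.mem_filter.1 hx).2
  · intro x hx y hy hxy
    have hx' := Finset.mem_Icc.1 (Finset.mem_filter.1 hx).1
    have hy' := Finset.mem_Icc.1 (Finset.mem_filter.1 hy).1
    have hmod : x % N = y % N := (ZMod.natCast_eq_natCast_iff x y N).1 hxy
    rcases eq_or_lt_of_le hx'.2 with h | h <;> rcases eq_or_lt_of_le hy'.2 with h' | h'
    · omega
    · rw [h, Nat.mod_self, Nat.mod_eq_of_lt h'] at hmod; omega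
    · rw [h', Nat.mod_self, Nat.mod_eq_of_lt h] at hmod; omega
    · rw [Nat.mod_eq_of_lt h, Nat.mod_eq_of_lt h'] at hmod; omega
  · intro b hb
    by_cases hb0 : b = 0
    · exact ⟨N, Finset.mem_filter.2 ⟨Finset.mem_Icc.2 ⟨hN, le_refl _⟩,
        by show ((N : ℕ) : ZMod N) ∈ S; rw [ZMod.natCast_self, ← hb0]; exact hb⟩,
        by show ((N : ℕ) : ZMod N) = b; rw [ZMod.natCast_self, hb0]⟩
    · have hv0 : b.val ≠ 0 := fun h => hb0 ((ZMod.val_eq_zero b).1 h)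
      have hcast : ((b.val : ℕ) : ZMod N) = b := ZMod.natCast_rightInverse b
      exact ⟨b.val, Finset.mem_filter.2 ⟨Finset.mem_Icc.2
        ⟨Nat.one_le_iff_ne_zero.2 hv0, (ZMod.val_lt b).le⟩,
        by show ((b.val : ℕ) : ZMod N) ∈ S; rw [hcast]; exact hb⟩, hcast⟩

/-- The coset as a filter by orbit membership in `ZMod N`. -/
lemma cosetOf_eq (q p i : ℕ) (hu : ((q : ZMod N)) ^ p = 1) (hp : 0 < p) :
    cosetOf q N i
      = (Finset.Icc 1 N).filter fun x : ℕ => (x : ZMod N) ∈ orb (q : ZMod N) p (i : ZMod N) := by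
  unfold cosetOf
  apply Finset.filter_congr
  intro x _
  rw [mem_orb_iff hu hp]
  constructor
  · rintro ⟨j, hj⟩
    refine ⟨j, ?_⟩
    have := (ZMod.natCast_eq_natCast_iff x (i * q ^ j) N).2 hj
    push_cast at this
    exact this
  · rintro ⟨j, hj⟩
    refine ⟨j, (ZMod.natCast_eq_natCast_iff x (i * q ^ j) N).1 ?_⟩
    push_cast
    exact hj

lemma card_cosetOf_s15 (hN : 0 < N) (q p i : ℕ) (hu : ((q : ZMod N)) ^ p = 1) (hp : 0 < p) :
    (cosetOf q N i).card = (orb (q : ZMod N) p (i : ZMod N)).card := by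
  rw [cosetOf_eq q p i hu hp, card_filter_Icc hN]

end ZModLemmas

lemma count_solutions (a g r : ℕ) (ha : 0 < a) (hco : Nat.Coprime r a) :
    ((Finset.range (a * g)).filter fun j => a ∣ 1 + j * r).card = g := by
  haveI : NeZero a := ⟨ha.ne'⟩
  have hru : IsUnit (r : ZMod a) := ⟨ZMod.unitOfCoprime r hco, ZMod.coe_unitOfCoprime r hco⟩
  set x : ZMod a := -(r : ZMod a)⁻¹ with hxdef
  set j0 := x.val with hj0def
  have hj0lt : j0 < a := ZMod.val_lt x
  have hxcast : ((j0 : ℕ) : ZMod a) = x := ZMod.natCast_rightInverse x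
  have hsol : a ∣ 1 + j0 * r := by
    rw [← ZMod.natCast_eq_zero_iff]
    push_cast
    rw [hxcast, hxdef]
    have : (r : ZMod a)⁻¹ * (r : ZMod a) = 1 := by
      rw [mul_comm]; exact ZMod.mul_inv_of_unit _ hru
    rw [neg_mul, this]
    ring
  suffices h : ((Finset.range (a * g)).filter fun j => a ∣ 1 + j * r).card
      = (Finset.range g).card by simpa using h
  apply Finset.card_bij' (i := fun j _ => j / a) (j := fun k _ => j0 + k * a)
  · intro j hj
    rw [Finset.mem_filter, Finset.mem_range] at hj
    rw [Finset.mem_range]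
    exact Nat.div_lt_of_lt_mul (by omega)
  · intro k hk
    rw [Finset.mem_range] at hk
    rw [Finset.mem_filter, Finset.mem_range]
    constructor
    · calc j0 + k * a < (k + 1) * a := by
            have e : (k + 1) * a = k * a + a := by ring
            omega
        _ ≤ g * a := Nat.mul_le_mul_right a hk
        _ = a * g := Nat.mul_comm g a
    · have : 1 + (j0 + k * a) * r = (1 + j0 * r) + a * (k * r) := by ring
      rw [this]
      exact dvd_add hsol (Dvd.intro _ rfl)
  · intro j hj
    rw [Finset.mem_filter, Finset.mem_range] at hj
    have hmod : j % a = j0 := by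
      have h1 : ((1 + j * r : ℕ) : ZMod a) = 0 :=
        (ZMod.natCast_eq_zero_iff _ _).2 hj.2
      have h2 : ((1 + j0 * r : ℕ) : ZMod a) = 0 :=
        (ZMod.natCast_eq_zero_iff _ _).2 hsol
      have h3 : ((j : ℕ) : ZMod a) * r = ((j0 : ℕ) : ZMod a) * r := by
        push_cast at h1 h2
        have := h1.trans h2.symm
        linear_combination this
      have h4 : ((j : ℕ) : ZMod a) = ((j0 : ℕ) : ZMod a) :=
        hru.mul_right_cancel h3
      have h5 : j ≡ j0 [MOD a] := (ZMod.natCast_eq_natCast_iff _ _ _).1 h4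
      have := h5
      unfold Nat.ModEq at this
      rw [Nat.mod_eq_of_lt hj0lt] at this
      exact this
    have h6 := Nat.div_add_mod j a
    have e : (j / a) * a = a * (j / a) := Nat.mul_comm _ _
    omega
  · intro k hk
    rw [Nat.add_mul_div_right _ _ ha, Nat.div_eq_of_lt hj0lt, zero_add]

section CosetLemmas

lemma Zset_bounds {n r i : ℕ} (hr : 0 < r) (hi : i ∈ Zset n r) : 1 ≤ i ∧ i ≤ n * r := by
  obtain ⟨k, hk, rfl⟩ := Finset.mem_image.1 hi
  rw [Finset.mem_range] at hk
  constructor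
  · omega
  · calc 1 + k * r ≤ r + k * r := by omega
      _ = (k + 1) * r := by ring
      _ ≤ n * r := Nat.mul_le_mul_right r hk

lemma mem_cosetOf_self {q N i : ℕ} (h1 : 1 ≤ i) (h2 : i ≤ N) : i ∈ cosetOf q N i := by
  unfold cosetOf
  refine Finset.mem_filter.2 ⟨Finset.mem_Icc.2 ⟨h1, h2⟩, ⟨0, ?_⟩⟩
  simpa using Nat.ModEq.refl i

lemma cosetOf_subset_Zset {q n r : ℕ} (hr : 0 < r) (hq1 : q ≡ 1 [MOD r]) {i : ℕ}
    (hi : i ∈ Zset n r) : cosetOf q (n * r) i ⊆ Zset n r := by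
  obtain ⟨k, hk, rfl⟩ := Finset.mem_image.1 hi
  rw [Finset.mem_range] at hk
  intro x hx
  unfold cosetOf at hx
  obtain ⟨hIcc, j, hmod⟩ := Finset.mem_filter.1 hx
  rw [Finset.mem_Icc] at hIcc
  have hmodr : x ≡ (1 + k * r) * q ^ j [MOD r] :=
    Nat.ModEq.of_dvd (dvd_mul_left r n) hmod
  have hi1 : (1 + k * r) ≡ 1 [MOD r] :=
    ((Nat.modEq_iff_dvd' (by omega)).2 ⟨k, by rw [Nat.add_sub_cancel_left, Nat.mul_comm]⟩).symm
  have hqj : q ^ j ≡ 1 [MOD r] := by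
    have := hq1.pow j
    simpa using this
  have hx1 : x ≡ 1 [MOD r] := by
    have := hmodr.trans (hi1.mul hqj)
    simpa using this
  have hdvd : r ∣ x - 1 := (Nat.modEq_iff_dvd' hIcc.1).1 hx1.symm
  obtain ⟨m, hm⟩ := hdvd
  have hm' : x - 1 = m * r := by rw [hm, Nat.mul_comm]
  have hxm : x = 1 + m * r := by omega
  have hmn : m < n := by
    have h1 : m * r < n * r := by omega
    exact lt_of_mul_lt_mul_right h1 (Nat.zero_le r)
  exact Finset.mem_image.2 ⟨m, Finset.mem_range.2 hmn, hxm.symm⟩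

end CosetLemmas

lemma cosetOf_eq_of_mem_s15 {N : ℕ} (hN : 0 < N) (q p i x : ℕ)
    (hu : ((q : ZMod N)) ^ p = 1) (hp : 0 < p) (hx : x ∈ cosetOf q N i) :
    cosetOf q N x = cosetOf q N i := by
  rw [cosetOf_eq q p i hu hp] at hx
  have horb : orb (q : ZMod N) p (x : ZMod N) = orb (q : ZMod N) p (i : ZMod N) :=
    orb_eq_of_mem hu hp (Finset.mem_filter.1 hx).2
  rw [cosetOf_eq q p i hu hp, cosetOf_eq q p x hu hp, horb]

theorem stmt15 (q n r p s : ℕ) (hq : IsPrimePow q) (hn : 0 < n) (hco : Nat.Coprime n q)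
    (hr : 0 < r) (hrdvd : r ∣ q - 1) (hp : p.Prime) (hs : 0 < s)
    (hnrs : n * r * s = q ^ p - 1)
    (hg : Nat.gcd r ((n * r) / Nat.gcd (n * r) (q - 1)) = 1) :
    (∀ i ∈ Zset n r, (cosetOf q (n * r) i).card = 1 ∨ (cosetOf q (n * r) i).card = p) ∧
    Ncount q n r 1 = Nat.gcd n ((q - 1) / r) ∧
    Ncount q n r p = (n - Nat.gcd n ((q - 1) / r)) / p := by
  have hq2 : 2 ≤ q := hq.two_le
  set N := n * r with hNdef
  have hN : 0 < N := Nat.mul_pos hn hr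
  haveI : NeZero N := ⟨hN.ne'⟩
  have hppos : 0 < p := hp.pos
  have hqp : q ^ p = N * s + 1 := by
    have h1 : 1 ≤ q ^ p := Nat.one_le_pow _ _ (by omega)
    omega
  have hu : ((q : ZMod N)) ^ p = 1 := by
    have h : ((q ^ p : ℕ) : ZMod N) = ((N * s + 1 : ℕ) : ZMod N) := by rw [hqp]
    push_cast at h
    rwa [ZMod.natCast_self, zero_mul, zero_add] at h
  -- Part 1
  have part1 : ∀ i ∈ Zset n r, (cosetOf q N i).card = 1 ∨ (cosetOf q N i).card = p := by
    intro i _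
    rw [card_cosetOf_s15 hN q p i hu hppos]
    exact card_orb hu hp _
  -- singleton characterization
  have horb1 : ∀ i : ℕ, ((cosetOf q N i).card = 1 ↔ N ∣ i * (q - 1)) := by
    intro i
    rw [card_cosetOf_s15 hN q p i hu hppos, card_orb_eq_one_iff hu hp]
    have hcast : ((i * (q - 1) : ℕ) : ZMod N)
        = (i : ZMod N) * (q : ZMod N) - (i : ZMod N) := by
      rw [Nat.cast_mul, Nat.cast_sub (by omega : 1 ≤ q)]
      push_cast
      ring
    rw [← ZMod.natCast_eq_zero_iff, hcast, sub_eq_zero]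
  -- arithmetic
  have hq1r : q ≡ 1 [MOD r] := ((Nat.modEq_iff_dvd' (by omega)).2 hrdvd).symm
  set t := (q - 1) / r with htdef
  have hqt : q - 1 = t * r := (Nat.div_mul_cancel hrdvd).symm
  set g := Nat.gcd n t with hgdef
  have hgpos : 0 < g := Nat.gcd_pos_of_pos_left _ hn
  set n' := n / g with hn'def
  have hnn' : n = n' * g := (Nat.div_mul_cancel (Nat.gcd_dvd_left n t)).symm
  set t' := t / g with ht'def
  have htt' : t = t' * g := (Nat.div_mul_cancel (Nat.gcd_dvd_right n t)).symm
  have hcopnt : Nat.Coprime n' t' := Nat.coprime_div_gcd_div_gcd hgpos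
  have hn'pos : 0 < n' := by
    rcases Nat.eq_zero_or_pos n' with h | h
    · rw [h, zero_mul] at hnn'; omega
    · exact h
  have hgcdNr : Nat.gcd N (q - 1) = g * r := by
    rw [hqt, hNdef]
    exact Nat.gcd_mul_right n r t
  have hcop_rn' : Nat.Coprime r n' := by
    have hquot : N / (g * r) = n' := by
      rw [hNdef, hnn', mul_assoc]
      exact Nat.mul_div_cancel n' (Nat.mul_pos hgpos hr)
    rw [hgcdNr, hquot] at hg
    exact hg
  have hdvd_iff : ∀ x : ℕ, (N ∣ x * (q - 1)) ↔ n' ∣ x := by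
    intro x
    rw [hqt, hNdef]
    have e1 : x * (t * r) = (x * t) * r := by ring
    rw [e1, Nat.mul_dvd_mul_iff_right hr, hnn', htt']
    have e2 : x * (t' * g) = (x * t') * g := by ring
    rw [e2, Nat.mul_dvd_mul_iff_right hgpos]
    constructor
    · exact fun h => hcopnt.dvd_of_dvd_mul_right h
    · exact fun h => Dvd.dvd.mul_right h t'
  -- injective map for Zset
  have hinj : Function.Injective (fun i : ℕ => 1 + i * r) := by
    intro a b h
    simp only at h
    exact Nat.eq_of_mul_eq_mul_right hr (Nat.add_left_cancel h)
  have hZcard : (Zset n r).card = n := by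
    rw [Zset, Finset.card_image_of_injective _ hinj, Finset.card_range]
  -- N1 computation
  have hcoset_single : ∀ i ∈ Zset n r, (cosetOf q N i).card = 1 → cosetOf q N i = {i} := by
    intro i hi hcard
    obtain ⟨b, hb⟩ := Finset.card_eq_one.1 hcard
    have hmem : i ∈ cosetOf q N i :=
      mem_cosetOf_self (Zset_bounds hr hi).1 (Zset_bounds hr hi).2
    rw [hb, Finset.mem_singleton] at hmem
    rw [hb, hmem]
  have hsingle : (cosetsIn q n r).filter (fun C => C.card = 1)
      = ((Zset n r).filter fun i => (cosetOf q N i).card = 1).image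
          (fun i => cosetOf q N i) := by
    ext C
    unfold cosetsIn
    simp only [Finset.mem_filter, Finset.mem_image]
    constructor
    · rintro ⟨⟨i, hi, rfl⟩, hcard⟩
      exact ⟨i, ⟨hi, hcard⟩, rfl⟩
    · rintro ⟨i, ⟨hi, hcard⟩, rfl⟩
      exact ⟨⟨i, hi, rfl⟩, hcard⟩
  have hN1g : Ncount q n r 1 = g := by
    rw [Ncount, hsingle, Finset.card_image_of_injOn]
    · rw [Zset, Finset.filter_image, Finset.card_image_of_injective _ hinj]
      have hpredeq : ∀ j ∈ Finset.range n,
          ((cosetOf q N (1 + j * r)).card = 1) ↔ (n' ∣ 1 + j * r) := by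
        intro j _
        exact (horb1 _).trans (hdvd_iff _)
      rw [Finset.filter_congr hpredeq, hnn']
      exact count_solutions n' g r hn'pos hcop_rn'
    · intro i hi i' hi' hee
      simp only [Finset.coe_filter, Set.mem_setOf_eq] at hi hi'
      have e1 := hcoset_single i hi.1 hi.2
      have e2 := hcoset_single i' hi'.1 hi'.2
      have hee' : cosetOf q N i = cosetOf q N i' := hee
      rw [e1, e2] at hee'
      exact Finset.singleton_injective hee' 
  -- partition / sum
  have hmem_self : ∀ i ∈ Zset n r, i ∈ cosetOf q N i := fun i hi =>
    mem_cosetOf_self (Zset_bounds hr hi).1 (Zset_bounds hr hi).2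
  have hmemIn : ∀ C ∈ cosetsIn q n r, ∃ i ∈ Zset n r, C = cosetOf q N i := by
    intro C hC
    unfold cosetsIn at hC
    obtain ⟨i, hi, rfl⟩ := Finset.mem_image.1 hC
    exact ⟨i, hi, rfl⟩
  have hsubZ : ∀ C ∈ cosetsIn q n r, C ⊆ Zset n r := by
    intro C hC
    obtain ⟨i, hi, rfl⟩ := hmemIn C hC
    exact cosetOf_subset_Zset hr hq1r hi
  have hcover : Zset n r = (cosetsIn q n r).biUnion (fun C => C) := by
    ext x
    simp only [Finset.mem_biUnion]
    constructor
    · intro hx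
      refine ⟨cosetOf q N x, ?_, hmem_self x hx⟩
      unfold cosetsIn
      exact Finset.mem_image_of_mem _ hx
    · rintro ⟨C, hC, hxC⟩
      exact hsubZ C hC hxC
  have hdisj : ∀ C1 ∈ cosetsIn q n r, ∀ C2 ∈ cosetsIn q n r, C1 ≠ C2 → Disjoint C1 C2 := by
    intro C1 h1 C2 h2 hne
    rw [Finset.disjoint_left]
    intro x hx1 hx2
    obtain ⟨i1, _, rfl⟩ := hmemIn C1 h1
    obtain ⟨i2, _, rfl⟩ := hmemIn C2 h2
    exact hne ((cosetOf_eq_of_mem_s15 hN q p i1 x hu hppos hx1).symm.trans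
      (cosetOf_eq_of_mem_s15 hN q p i2 x hu hppos hx2))
  have hsum : ∑ C ∈ cosetsIn q n r, C.card = n := by
    rw [← Finset.card_biUnion hdisj, ← hcover, hZcard]
  have hflt : (cosetsIn q n r).filter (fun C => ¬ C.card = 1)
      = (cosetsIn q n r).filter (fun C => C.card = p) := by
    apply Finset.filter_congr
    intro C hC
    obtain ⟨i, hi, rfl⟩ := hmemIn C hC
    rcases part1 i hi with h | h <;> rw [h]
    · have := hp.one_lt
      constructor
      · intro hcon; omega
      · intro hcon; omega
    · have := hp.one_lt
      constructor
      · intro _; rfl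
      · intro _; omega
  have hsplit : Ncount q n r 1 + (Ncount q n r p) * p = n := by
    have htot := Finset.sum_filter_add_sum_filter_not (cosetsIn q n r)
      (fun C => C.card = 1) (fun C => C.card)
    have hA : (∑ C ∈ (cosetsIn q n r).filter (fun C => C.card = 1), C.card)
        = Ncount q n r 1 := by
      rw [Finset.sum_congr rfl (fun C hC => (Finset.mem_filter.1 hC).2), Finset.sum_const,
        smul_eq_mul, mul_one, Ncount]
    have hB : (∑ C ∈ (cosetsIn q n r).filter (fun C => ¬ C.card = 1), C.card)
        = Ncount q n r p * p := by
      rw [hflt, Finset.sum_congr rfl (fun C hC => (Finset.mem_filter.1 hC).2), Finset.sum_const,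
        smul_eq_mul, Ncount]
    omega
  refine ⟨part1, hN1g, ?_⟩
  have heq : n - g = Ncount q n r p * p := by omega
  rw [heq, Nat.mul_div_cancel _ hppos]
end
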